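/- Let M be an n×m real matrix, partitioned as M = [K | N] where K consists of the first k columns and N of the remaining m−k columns. Then the set I_k of vectors a ∈ ℝ^k such that the extended vector (a,0) ∈ ℝ^m lies in the row span of M is a linear subspace of ℝ^k of dimension rank(M) − rank(N). -/

import Mathlib

open Matrix

/-- The linear map extending `a : ℝ^k` by zeros to `ℝ^k ⊕ ℝ^l`. -/
def extByZero (k l : ℕ) : (Fin k → ℝ) →ₗ[ℝ] (Fin k ⊕ Fin l → ℝ) where
  toFun a := Sum.elim a 0
  map_add' a b := by funext x; cases x <;> simp
  map_smul' c a := by funext x; cases x <;> simp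

/-- For `M = [K | N]` an `n × m` real matrix (columns indexed by
`Fin k ⊕ Fin l`, so `m = k + l`, with `N` the last `l` columns), the set of
`a ∈ ℝ^k` with `(a,0)` in the row span of `M` is a subspace of dimension
`rank M − rank N`. -/
theorem stmt0 (n k l : ℕ) (M : Matrix (Fin n) (Fin k ⊕ Fin l) ℝ) :
    ∃ S : Submodule ℝ (Fin k → ℝ),
      (∀ a : Fin k → ℝ,
        a ∈ S ↔ Sum.elim a (0 : Fin l → ℝ) ∈
          Submodule.span ℝ (Set.range (fun i : Fin n => M i))) ∧
      Module.finrank ℝ S =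
        M.rank - (Matrix.of fun (i : Fin n) (j : Fin l) => M i (Sum.inr j)).rank := by
  classical
  set R : Submodule ℝ (Fin k ⊕ Fin l → ℝ) :=
    Submodule.span ℝ (Set.range (fun i : Fin n => M i)) with hR
  set S : Submodule ℝ (Fin k → ℝ) := R.comap (extByZero k l) with hS
  refine ⟨S, fun a => Iff.rfl, ?_⟩
  -- projection to the last l coordinates
  set π : (Fin k ⊕ Fin l → ℝ) →ₗ[ℝ] (Fin l → ℝ) := LinearMap.funLeft ℝ ℝ Sum.inr with hπ
  set f : R →ₗ[ℝ] (Fin l → ℝ) := π.domRestrict R with hf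
  -- range f is the row span of N
  have hrange : LinearMap.range f =
      Submodule.span ℝ (Set.range (fun i : Fin n =>
        (Matrix.of fun (i : Fin n) (j : Fin l) => M i (Sum.inr j)) i)) := by
    have h1 : LinearMap.range f = R.map π := by
      rw [hf, LinearMap.range_domRestrict]
    rw [h1, hR, Submodule.map_span]
    congr 1
    ext x
    constructor
    · rintro ⟨y, ⟨i, rfl⟩, rfl⟩; exact ⟨i, rfl⟩
    · rintro ⟨i, rfl⟩; exact ⟨M i, ⟨i, rfl⟩, rfl⟩
  have hinj : Function.Injective (extByZero k l) := by
    intro a b hab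
    funext x
    have := congrFun hab (Sum.inl x)
    simpa [extByZero] using this
  -- map extByZero S = ker π ⊓ R
  have hmap : S.map (extByZero k l) = LinearMap.ker π ⊓ R := by
    ext v
    constructor
    · rintro ⟨a, ha, rfl⟩
      refine ⟨?_, ha⟩
      simp only [LinearMap.mem_ker, hπ]
      funext j
      simp [extByZero]
    · rintro ⟨hv1, hv2⟩
      have hv' : ∀ j, v (Sum.inr j) = 0 := by
        intro j
        have := congrFun (LinearMap.mem_ker.mp hv1) j
        simpa [hπ] using this
      have hveq : Sum.elim (fun i => v (Sum.inl i)) (0 : Fin l → ℝ) = v := by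
        funext x; cases x with
        | inl i => rfl
        | inr j => exact (hv' j).symm
      refine ⟨fun i => v (Sum.inl i), ?_, hveq⟩
      show Sum.elim (fun i => v (Sum.inl i)) 0 ∈ R
      rwa [hveq]
  -- ker f corresponds to ker π ⊓ R
  have hker : LinearMap.ker f = (LinearMap.ker π).comap R.subtype := by
    rw [hf, LinearMap.ker_domRestrict]
  have hkermap : (LinearMap.ker f).map R.subtype = LinearMap.ker π ⊓ R := by
    rw [hker, Submodule.map_comap_subtype, inf_comm]
  have e1 : Module.finrank ℝ S = Module.finrank ℝ (S.map (extByZero k l)) :=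
    (Submodule.equivMapOfInjective _ hinj S).finrank_eq
  have e2 : Module.finrank ℝ (LinearMap.ker f) =
      Module.finrank ℝ ((LinearMap.ker f).map R.subtype) :=
    (Submodule.equivMapOfInjective _ (Submodule.injective_subtype R) _).finrank_eq
  have hSker : Module.finrank ℝ S = Module.finrank ℝ (LinearMap.ker f) := by
    rw [e1, e2, hmap, hkermap]
  have h2 := LinearMap.finrank_range_add_finrank_ker f
  have hrankM : M.rank = Module.finrank ℝ R := by
    rw [M.rank_eq_finrank_span_row]
    rfl
  have hrankN : (Matrix.of fun (i : Fin n) (j : Fin l) => M i (Sum.inr j)).rank =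
      Module.finrank ℝ (LinearMap.range f) := by
    rw [Matrix.rank_eq_finrank_span_row, hrange]
    rfl
  rw [hrankM, hrankN, hSker]
  omega
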